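/- arXiv:2309.05117 — 5 statements merged into one kernel-verified Lean document; each statement's English description precedes it below -/
import Mathlib

section
/- Let C ≥ 0, let (x_k) and (x̂_k) be sequences in ℝ^n, let (Φ_k) be a sequence of maps ℝ^n → ℝ^n, (A_k) a sequence of n×n real matrices, and (η_k) a sequence of nonnegative reals. Assume for every k: (i) x_{k+1} = x_k + Φ_k(x_k); (ii) x̂_{k+1} = x̂_k + A_k x̂_k; (iii) ‖Φ_k(a) − Φ_k(b)‖ ≤ C‖a − b‖ for all a, b ∈ ℝ^n; (iv) ‖Φ_k(x̂_k) − A_k x̂_k‖ ≤ η_k. Then for every n ≥ 0: ‖x_n − x̂_n‖ ≤ (1 + C)^n · ‖x_0 − x̂_0‖ + Σ_{k=0}^{n−1} (1 + C)^{n−1−k} · η_k. -/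
open scoped Matrix

/-- Iterated (telescoped) pointwise error bound of Proposition 5.1 for time-varying DMD. -/
theorem iterated_error_bound {n : ℕ} (C : ℝ) (hC : 0 ≤ C)
    (x xh : ℕ → EuclideanSpace ℝ (Fin n))
    (Φ : ℕ → EuclideanSpace ℝ (Fin n) → EuclideanSpace ℝ (Fin n))
    (A : ℕ → Matrix (Fin n) (Fin n) ℝ) (η : ℕ → ℝ) (hη : ∀ k, 0 ≤ η k)
    (hx : ∀ k, x (k + 1) = x k + Φ k (x k))
    (hxh : ∀ k, xh (k + 1) = xh k + (EuclideanSpace.equiv (Fin n) ℝ).symm (A k *ᵥ xh k))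
    (hLip : ∀ (k : ℕ) (a b : EuclideanSpace ℝ (Fin n)), ‖Φ k a - Φ k b‖ ≤ C * ‖a - b‖)
    (hmod : ∀ k, ‖Φ k (xh k) - (EuclideanSpace.equiv (Fin n) ℝ).symm (A k *ᵥ xh k)‖ ≤ η k) :
    ∀ N : ℕ, ‖x N - xh N‖ ≤
      (1 + C) ^ N * ‖x 0 - xh 0‖ +
        ∑ k ∈ Finset.range N, (1 + C) ^ (N - 1 - k) * η k := by
  intro N
  induction N with
  | zero => simp
  | succ N ih =>
    have hstep : ‖x (N + 1) - xh (N + 1)‖ ≤ (1 + C) * ‖x N - xh N‖ + η N := by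
      have h1 : x (N + 1) - xh (N + 1) =
          (x N - xh N) + (Φ N (x N) - Φ N (xh N)) +
          (Φ N (xh N) - (EuclideanSpace.equiv (Fin n) ℝ).symm (A N *ᵥ xh N)) := by
        rw [hx N, hxh N]; abel
      calc ‖x (N + 1) - xh (N + 1)‖
          ≤ ‖(x N - xh N) + (Φ N (x N) - Φ N (xh N))‖ +
            ‖Φ N (xh N) - (EuclideanSpace.equiv (Fin n) ℝ).symm (A N *ᵥ xh N)‖ := by
            rw [h1]; exact norm_add_le _ _
        _ ≤ (‖x N - xh N‖ + ‖Φ N (x N) - Φ N (xh N)‖) + η N :=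
            add_le_add (norm_add_le _ _) (hmod N)
        _ ≤ (‖x N - xh N‖ + C * ‖x N - xh N‖) + η N := by
            have := hLip N (x N) (xh N); linarith
        _ = (1 + C) * ‖x N - xh N‖ + η N := by ring
    have hmono : (1 + C) * ‖x N - xh N‖ + η N ≤
        (1 + C) * ((1 + C) ^ N * ‖x 0 - xh 0‖ +
          ∑ k ∈ Finset.range N, (1 + C) ^ (N - 1 - k) * η k) + η N := by
      have h1C : (0:ℝ) ≤ 1 + C := by linarith
      nlinarith [mul_le_mul_of_nonneg_left ih h1C]
    have hsum : (1 + C) * ((1 + C) ^ N * ‖x 0 - xh 0‖ +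
          ∑ k ∈ Finset.range N, (1 + C) ^ (N - 1 - k) * η k) + η N =
        (1 + C) ^ (N + 1) * ‖x 0 - xh 0‖ +
          ∑ k ∈ Finset.range (N + 1), (1 + C) ^ (N + 1 - 1 - k) * η k := by
      rw [Finset.sum_range_succ, mul_add, Finset.mul_sum]
      have : ∀ k ∈ Finset.range N, (1 + C) * ((1 + C) ^ (N - 1 - k) * η k) =
          (1 + C) ^ (N + 1 - 1 - k) * η k := by
        intro k hk
        have hk' : k < N := Finset.mem_range.mp hk
        have : N + 1 - 1 - k = (N - 1 - k) + 1 := by omega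
        rw [this, pow_succ]; ring
      rw [Finset.sum_congr rfl this]
      simp [pow_succ]
      ring
    calc ‖x (N + 1) - xh (N + 1)‖ ≤ (1 + C) * ‖x N - xh N‖ + η N := hstep
      _ ≤ _ := hmono
      _ = _ := hsum
end

section
/- Let X_m be a real N×m matrix with X_mᵀX_m invertible, let u ∈ ℝ^N, write X_m† = (X_mᵀX_m)⁻¹X_mᵀ, set d = ‖u‖² − uᵀ X_m (X_mᵀX_m)⁻¹ X_mᵀ u, assume d ≠ 0, set c = 1/d, and let X = [X_m, u] be the N×(m+1) matrix obtained by appending the column u. Then XᵀX is invertible and the pseudoinverse X† = (XᵀX)⁻¹Xᵀ is the (m+1)×N matrix whose first m rows form the matrix X_m† − c·(X_m† u)·((I − X_m X_m†)u)ᵀ and whose last row is c·((I − X_m X_m†)u)ᵀ. -/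
open scoped Matrix

/-- Append a column `u` to an `N × m` matrix, yielding an `N × (m+1)` matrix. -/
def appendCol {N m : ℕ} (X : Matrix (Fin N) (Fin m) ℝ) (u : Fin N → ℝ) :
    Matrix (Fin N) (Fin (m + 1)) ℝ :=
  Matrix.of fun i => Fin.snoc (X i) (u i)

/-- Append a row `z` to an `m × N` matrix, yielding an `(m+1) × N` matrix. -/
def appendRow {N m : ℕ} (Z : Matrix (Fin m) (Fin N) ℝ) (z : Fin N → ℝ) :
    Matrix (Fin (m + 1)) (Fin N) ℝ :=
  Matrix.of (Fin.snoc Z z)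

lemma transpose_appendCol {N m : ℕ} (X : Matrix (Fin N) (Fin m) ℝ) (u : Fin N → ℝ) :
    (appendCol X u)ᵀ = appendRow Xᵀ u := by
  ext i j
  refine Fin.lastCases ?_ ?_ i <;> simp [appendCol, appendRow, Fin.snoc]

lemma appendRow_mul {N m k : ℕ} (Z : Matrix (Fin m) (Fin N) ℝ) (z : Fin N → ℝ)
    (M : Matrix (Fin N) (Fin k) ℝ) :
    appendRow Z z * M = appendRow (Z * M) (z ᵥ* M) := by
  ext i j
  refine Fin.lastCases ?_ ?_ i <;>
    simp [appendRow, Matrix.mul_apply, Matrix.vecMul, dotProduct, Fin.snoc]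

lemma mul_appendCol {k N m : ℕ} (M : Matrix (Fin k) (Fin N) ℝ)
    (X : Matrix (Fin N) (Fin m) ℝ) (u : Fin N → ℝ) :
    M * appendCol X u = appendCol (M * X) (M *ᵥ u) := by
  ext i j
  refine Fin.lastCases ?_ ?_ j <;>
    simp [appendCol, Matrix.mul_apply, Matrix.mulVec, dotProduct]

lemma appendRow_mulVec {N m : ℕ} (Z : Matrix (Fin m) (Fin N) ℝ) (z : Fin N → ℝ)
    (u : Fin N → ℝ) :
    appendRow Z z *ᵥ u = Fin.snoc (Z *ᵥ u) (z ⬝ᵥ u) := by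
  ext i
  refine Fin.lastCases ?_ ?_ i <;>
    simp [appendRow, Matrix.mulVec, dotProduct, Fin.snoc]

lemma appendCol_mul_appendRow {N m : ℕ} (X : Matrix (Fin N) (Fin m) ℝ) (u : Fin N → ℝ)
    (Z : Matrix (Fin m) (Fin N) ℝ) (z : Fin N → ℝ) :
    appendCol X u * appendRow Z z = X * Z + Matrix.vecMulVec u z := by
  ext i j
  simp [appendCol, appendRow, Matrix.mul_apply, Fin.sum_univ_castSucc,
    Matrix.vecMulVec_apply, Fin.snoc]

lemma vecMulVec_mul' {N m k : ℕ} (w : Fin m → ℝ) (r : Fin N → ℝ)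
    (X : Matrix (Fin N) (Fin k) ℝ) :
    Matrix.vecMulVec w r * X = Matrix.vecMulVec w (r ᵥ* X) := by
  ext i j
  simp [Matrix.mul_apply, Matrix.vecMulVec_apply, Matrix.vecMul, dotProduct,
    Finset.mul_sum, mul_assoc]

lemma mul_vecMulVec' {N m k : ℕ} (M : Matrix (Fin k) (Fin N) ℝ) (w : Fin N → ℝ)
    (r : Fin m → ℝ) :
    M * Matrix.vecMulVec w r = Matrix.vecMulVec (M *ᵥ w) r := by
  ext i j
  simp only [Matrix.mul_apply, Matrix.vecMulVec_apply, Matrix.mulVec, dotProduct]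
  rw [Finset.sum_mul]
  exact Finset.sum_congr rfl fun _ _ => by ring

lemma vecMulVec_mulVec' {N m : ℕ} (w : Fin m → ℝ) (r : Fin N → ℝ) (u : Fin N → ℝ) :
    Matrix.vecMulVec w r *ᵥ u = (r ⬝ᵥ u) • w := by
  ext i
  simp only [Matrix.mulVec, Matrix.vecMulVec_apply, dotProduct, Pi.smul_apply,
    smul_eq_mul, Finset.mul_sum]
  rw [Finset.sum_mul]
  exact Finset.sum_congr rfl fun _ _ => by ring

lemma one_eq_append {m : ℕ} :
    (1 : Matrix (Fin (m + 1)) (Fin (m + 1)) ℝ) =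
      appendCol (appendRow 1 0) (Fin.snoc 0 1) := by
  ext i j
  refine Fin.lastCases ?_ ?_ j <;> [skip; intro j] <;>
    refine Fin.lastCases ?_ ?_ i <;> try intro i
  · simp [appendCol, appendRow]
  · simp [appendCol, appendRow, Matrix.one_apply, Fin.ext_iff,
      (Fin.castSucc_lt_last i).ne]
  · simp [appendCol, appendRow, Matrix.one_apply, Fin.ext_iff,
      (Fin.castSucc_lt_last j).ne', Fin.snoc]
  · simp [appendCol, appendRow, Matrix.one_apply, Fin.ext_iff, Fin.snoc]


lemma vecMulVec_smul_right {N m : ℕ} (a : Fin m → ℝ) (c : ℝ) (b : Fin N → ℝ) :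
    Matrix.vecMulVec a (c • b) = c • Matrix.vecMulVec a b := by
  ext i j; simp [Matrix.vecMulVec_apply, mul_comm, mul_left_comm]

lemma vecMulVec_sub_left {N m : ℕ} (a b : Fin N → ℝ) (r : Fin m → ℝ) :
    Matrix.vecMulVec (a - b) r = Matrix.vecMulVec a r - Matrix.vecMulVec b r := by
  ext i j; simp [Matrix.vecMulVec_apply, sub_mul]

lemma vecMulVec_zero_left {N m : ℕ} (b : Fin N → ℝ) :
    Matrix.vecMulVec (0 : Fin m → ℝ) b = 0 := by
  ext i j; simp [Matrix.vecMulVec_apply]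

lemma vecMulVec_zero_right {N m : ℕ} (a : Fin m → ℝ) :
    Matrix.vecMulVec a (0 : Fin N → ℝ) = 0 := by
  ext i j; simp [Matrix.vecMulVec_apply]

lemma vecMul_vecMulVec {N m : ℕ} (v : Fin N → ℝ) (a : Fin N → ℝ) (b : Fin m → ℝ) :
    v ᵥ* Matrix.vecMulVec a b = (v ⬝ᵥ a) • b := by
  ext j
  simp only [Matrix.vecMul, dotProduct, Matrix.vecMulVec_apply, Pi.smul_apply,
    smul_eq_mul]
  rw [Finset.sum_mul]
  exact Finset.sum_congr rfl fun _ _ => by ring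


set_option maxHeartbeats 1000000 in
/-- Lemma 5.4 (updating the pseudoinverse after appending a snapshot column). -/
theorem pseudoinverse_update {N m : ℕ} (Xm : Matrix (Fin N) (Fin m) ℝ)
    (u : EuclideanSpace ℝ (Fin N))
    (hinv : IsUnit (Xmᵀ * Xm).det)
    (d : ℝ) (hd : d = ‖u‖ ^ 2 - u ⬝ᵥ ((Xm * (Xmᵀ * Xm)⁻¹ * Xmᵀ) *ᵥ u))
    (hd0 : d ≠ 0) (c : ℝ) (hc : c = 1 / d) :
    IsUnit ((appendCol Xm u)ᵀ * appendCol Xm u).det ∧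
      ((appendCol Xm u)ᵀ * appendCol Xm u)⁻¹ * (appendCol Xm u)ᵀ =
        appendRow
          ((Xmᵀ * Xm)⁻¹ * Xmᵀ -
            c • Matrix.vecMulVec (((Xmᵀ * Xm)⁻¹ * Xmᵀ) *ᵥ u)
              ((1 - Xm * ((Xmᵀ * Xm)⁻¹ * Xmᵀ)) *ᵥ u))
          (c • ((1 - Xm * ((Xmᵀ * Xm)⁻¹ * Xmᵀ)) *ᵥ u)) := by
  set G := Xmᵀ * Xm with hG
  set P := G⁻¹ * Xmᵀ with hP
  set w := P *ᵥ u with hw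
  set r := (1 - Xm * P) *ᵥ u with hr
  set Z := P - c • Matrix.vecMulVec w r with hZ
  set z := c • r with hz
  set A := appendCol Xm u with hA
  -- basic facts
  have hGT : Gᵀ = G := by rw [hG, Matrix.transpose_mul, Matrix.transpose_transpose]
  have hPX : P * Xm = 1 := by
    rw [hP, Matrix.mul_assoc, ← hG, Matrix.nonsing_inv_mul G hinv]
  have hGP : G * P = Xmᵀ := by
    rw [hP, Matrix.mul_nonsing_inv_cancel_left G Xmᵀ hinv]
  have hXtr : Xmᵀ * (1 - Xm * P) = 0 := by
    rw [Matrix.mul_sub, Matrix.mul_one, ← Matrix.mul_assoc, ← hG, hGP, sub_self]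
  have hXr : Xmᵀ *ᵥ r = 0 := by
    rw [hr, Matrix.mulVec_mulVec, hXtr, Matrix.zero_mulVec]
  have hrX : r ᵥ* Xm = 0 := by
    rw [← Matrix.mulVec_transpose, hXr]
  have hsym : (Xm * P)ᵀ = Xm * P := by
    rw [Matrix.transpose_mul, hP, Matrix.transpose_mul, Matrix.transpose_transpose,
      Matrix.transpose_nonsing_inv, hGT, ← Matrix.mul_assoc]
  have hnorm : ‖u‖ ^ 2 = u ⬝ᵥ u := by
    rw [EuclideanSpace.norm_sq_eq]
    simp [dotProduct, sq]
  have hur : u ⬝ᵥ r = d := by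
    rw [hr, Matrix.sub_mulVec, Matrix.one_mulVec, dotProduct_sub, hd, hnorm, hP,
      ← Matrix.mul_assoc]
  have hru : r ⬝ᵥ u = d := by rw [dotProduct_comm]; exact hur
  have hcd : c * d = 1 := by rw [hc]; field_simp
  -- B * A = 1
  have hZX : Z * Xm = 1 := by
    rw [hZ, Matrix.sub_mul, hPX, Matrix.smul_mul, vecMulVec_mul', hrX,
      vecMulVec_zero_right, smul_zero, sub_zero]
  have hzX : z ᵥ* Xm = 0 := by
    rw [hz, Matrix.smul_vecMul, hrX, smul_zero]
  have hZu : Z *ᵥ u = 0 := by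
    rw [hZ, Matrix.sub_mulVec, Matrix.smul_mulVec, vecMulVec_mulVec', hru,
      ← hw, smul_smul, hcd, one_smul, sub_self]
  have hzu : z ⬝ᵥ u = 1 := by
    rw [hz, smul_dotProduct, hru, smul_eq_mul, hcd]
  have hBA : appendRow Z z * A = 1 := by
    rw [hA, mul_appendCol, appendRow_mul, appendRow_mulVec, hZX, hzX, hZu, hzu,
      ← one_eq_append]
  -- A * B = Xm * P + c • vecMulVec r r
  have hAB : A * appendRow Z z = Xm * P + c • Matrix.vecMulVec r r := by
    rw [hA, appendCol_mul_appendRow, hZ, hz, Matrix.mul_sub, Matrix.mul_smul,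
      mul_vecMulVec', vecMulVec_smul_right]
    have h1 : Matrix.vecMulVec u r - Matrix.vecMulVec (Xm *ᵥ w) r = Matrix.vecMulVec r r := by
      rw [← vecMulVec_sub_left]
      ext i
      simp [hr, Matrix.sub_mulVec, Matrix.one_mulVec, hw, ← Matrix.mulVec_mulVec]
    rw [← h1, smul_sub]
    abel
  -- (Aᵀ * A) * B = Aᵀ
  have hAtB : Aᵀ * A * appendRow Z z = Aᵀ := by
    have hAt : Aᵀ = appendRow Xmᵀ u := by rw [hA, transpose_appendCol]
    rw [Matrix.mul_assoc, hAB, hAt, appendRow_mul]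
    have hXM : Xmᵀ * (Xm * P + c • Matrix.vecMulVec r r) = Xmᵀ := by
      rw [Matrix.mul_add, ← Matrix.mul_assoc, ← hG, hGP, Matrix.mul_smul,
        mul_vecMulVec', hXr, vecMulVec_zero_left, smul_zero, add_zero]
    have hUM : u ᵥ* (Xm * P + c • Matrix.vecMulVec r r) = u := by
      rw [Matrix.vecMul_add, ← Matrix.mulVec_transpose, hsym, ← vecMulVec_smul_right,
        vecMul_vecMulVec, hur, smul_smul, mul_comm, hcd, one_smul, hr,
        Matrix.sub_mulVec, Matrix.one_mulVec]
      ext i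
      simp
    rw [hXM, hUM]
  have hBright : Aᵀ * A * (appendRow Z z * (appendRow Z z)ᵀ) = 1 := by
    rw [← Matrix.mul_assoc, hAtB, ← Matrix.transpose_mul, hBA, Matrix.transpose_one]
  have hUnit : IsUnit (Aᵀ * A).det := Matrix.isUnit_det_of_right_inverse hBright
  refine ⟨hUnit, ?_⟩
  have h := Matrix.nonsing_inv_mul_cancel_left (Aᵀ * A) (appendRow Z z) hUnit
  rw [hAtB] at h
  exact h
end

section
/- Let X_m, Y_m be real N×m matrices, u, v ∈ ℝ^N, and σ > 0 with ‖X_m w‖ ≥ σ‖w‖ for all w ∈ ℝ^m, with X_mᵀX_m invertible. Write X_m† = (X_mᵀX_m)⁻¹X_mᵀ, set d = ‖u‖² − uᵀ X_m X_m† u, assume d > 0, and set c = 1/d. Let X = [X_m, u] and Y = [Y_m, v] be the augmented N×(m+1) matrices, K = Y·(XᵀX)⁻¹Xᵀ and K_m = Y_m·X_m†. Then ‖K − K_m‖₂ ≤ c·‖u‖·√(1 + ‖u‖²/σ²)·√(‖Y_m‖₂² + ‖v‖²) + ‖v‖/σ. -/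
open scoped Matrix Matrix.Norms.L2Operator RealInnerProductSpace

lemma dotSelf_eq_norm_sq {n : ℕ} (x : EuclideanSpace ℝ (Fin n)) : x ⬝ᵥ x = ‖x‖ ^ 2 := by
  rw [EuclideanSpace.norm_eq, Real.sq_sqrt (by positivity)]
  simp [dotProduct, sq]

lemma dot_eq_inner {n : ℕ} (x y : EuclideanSpace ℝ (Fin n)) : x ⬝ᵥ y = ⟪x, y⟫ := by
  simp [PiLp.inner_apply, dotProduct, RCLike.inner_apply, mul_comm]

lemma l2_opNorm_le_bound {N M : ℕ} (A : Matrix (Fin N) (Fin M) ℝ) (C : ℝ) (hC : 0 ≤ C)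
    (h : ∀ x : EuclideanSpace ℝ (Fin M),
      ‖(WithLp.equiv 2 (Fin N → ℝ)).symm (A *ᵥ (WithLp.equiv 2 (Fin M → ℝ) x))‖ ≤ C * ‖x‖) :
    ‖A‖ ≤ C := by
  rw [Matrix.l2_opNorm_def]
  exact ContinuousLinearMap.opNorm_le_bound _ hC fun x => h x

lemma rankOne_bound {N M : ℕ} (c : ℝ) (a : EuclideanSpace ℝ (Fin N))
    (b : EuclideanSpace ℝ (Fin M)) :
    ‖(Matrix.of fun i j => c * a i * b j : Matrix (Fin N) (Fin M) ℝ)‖ ≤ |c| * ‖a‖ * ‖b‖ := by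
  apply l2_opNorm_le_bound _ _ (by positivity)
  intro x
  have hmv : (Matrix.of fun i j => c * a i * b j : Matrix (Fin N) (Fin M) ℝ) *ᵥ
      (WithLp.equiv 2 (Fin M → ℝ) x) = (c * (b ⬝ᵥ x)) • (WithLp.equiv 2 (Fin N → ℝ) a) := by
    funext i
    simp [Matrix.mulVec, dotProduct, Finset.mul_sum, mul_assoc, mul_left_comm, mul_comm]
  rw [hmv]
  have heq : (WithLp.equiv 2 (Fin N → ℝ)).symm ((c * (b ⬝ᵥ x)) • (WithLp.equiv 2 (Fin N → ℝ) a))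
      = (c * (b ⬝ᵥ x)) • a := rfl
  rw [heq, norm_smul]
  have hin : |b ⬝ᵥ x| ≤ ‖b‖ * ‖x‖ := by
    rw [dot_eq_inner]; exact abs_real_inner_le_norm b x
  calc ‖c * (b ⬝ᵥ x)‖ * ‖a‖ = |c| * |b ⬝ᵥ x| * ‖a‖ := by rw [Real.norm_eq_abs, abs_mul]
    _ ≤ |c| * (‖b‖ * ‖x‖) * ‖a‖ := by gcongr
    _ = |c| * ‖a‖ * ‖b‖ * ‖x‖ := by ring

set_option maxHeartbeats 2000000 in
/-- Proposition 5.5 (operator 2-norm perturbation under column deletion). -/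
theorem opNorm_perturbation_column_deletion {N m : ℕ}
    (Xm Ym : Matrix (Fin N) (Fin m) ℝ)
    (u v : EuclideanSpace ℝ (Fin N))
    (σ : ℝ) (hσ : 0 < σ)
    (hXmσ : ∀ w : EuclideanSpace ℝ (Fin m),
      σ * ‖w‖ ≤ ‖(EuclideanSpace.equiv (Fin N) ℝ).symm (Xm *ᵥ w)‖)
    (hinv : IsUnit (Xmᵀ * Xm).det)
    (d : ℝ) (hd : d = ‖u‖ ^ 2 - u ⬝ᵥ ((Xm * ((Xmᵀ * Xm)⁻¹ * Xmᵀ)) *ᵥ u))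
    (hd0 : 0 < d) (c : ℝ) (hc : c = 1 / d) :
    ‖appendCol Ym v * (((appendCol Xm u)ᵀ * appendCol Xm u)⁻¹ * (appendCol Xm u)ᵀ) -
        Ym * ((Xmᵀ * Xm)⁻¹ * Xmᵀ)‖ ≤
      c * ‖u‖ * Real.sqrt (1 + ‖u‖ ^ 2 / σ ^ 2) * Real.sqrt (‖Ym‖ ^ 2 + ‖v‖ ^ 2) +
        ‖v‖ / σ := by
  classical
  set P := Xmᵀ * Xm with hP
  have hPl : P⁻¹ * P = 1 := Matrix.nonsing_inv_mul P hinv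
  have hPr : P * P⁻¹ = 1 := Matrix.mul_nonsing_inv P hinv
  have hPsymm : Pᵀ = P := by rw [hP, Matrix.transpose_mul, Matrix.transpose_transpose]
  set w : Fin m → ℝ := Xmᵀ *ᵥ u with hw
  set p : Fin m → ℝ := P⁻¹ *ᵥ w with hp
  have hPp : P *ᵥ p = w := by
    rw [hp, Matrix.mulVec_mulVec, hPr, Matrix.one_mulVec]
  have hvmul : p ᵥ* P = w := by rw [← Matrix.mulVec_transpose, hPsymm, hPp]
  have hup : u ⬝ᵥ (Xm *ᵥ p) = w ⬝ᵥ p := by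
    rw [Matrix.dotProduct_mulVec, ← Matrix.mulVec_transpose, ← hw]
  have hd' : u ⬝ᵥ u - w ⬝ᵥ p = d := by
    rw [hd, ← dotSelf_eq_norm_sq]
    have : (Xm * (P⁻¹ * Xmᵀ)) *ᵥ u = Xm *ᵥ p := by
      rw [hp, hw, ← Matrix.mulVec_mulVec, ← Matrix.mulVec_mulVec]
    rw [this, hup]
  have hdne : d ≠ 0 := ne_of_gt hd0
  have hcd : c * (u ⬝ᵥ u - w ⬝ᵥ p) = 1 := by rw [hd', hc]; field_simp
  have hc0 : 0 ≤ c := by rw [hc]; positivity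
  -- candidate inverse of the Gram matrix
  set B : Matrix (Fin (m + 1)) (Fin (m + 1)) ℝ := Matrix.of fun j k =>
    Fin.lastCases
      (Fin.lastCases c (fun k' => -(c * p k')) k)
      (fun j' => Fin.lastCases (-(c * p j')) (fun k' => P⁻¹ j' k' + c * p j' * p k') k) j
    with hB
  have hB11 : ∀ j' k' : Fin m, B j'.castSucc k'.castSucc = P⁻¹ j' k' + c * p j' * p k' := by
    intro j' k'; simp [hB]
  have hB12 : ∀ j' : Fin m, B j'.castSucc (Fin.last m) = -(c * p j') := by
    intro j'; simp [hB]
  have hB21 : ∀ k' : Fin m, B (Fin.last m) k'.castSucc = -(c * p k') := by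
    intro k'; simp [hB]
  have hB22 : B (Fin.last m) (Fin.last m) = c := by simp [hB]
  set X := appendCol Xm u with hX
  set G := Xᵀ * X with hG
  have hG11 : ∀ j' k' : Fin m, G j'.castSucc k'.castSucc = P j' k' := by
    intro j' k'
    rw [hG, Matrix.mul_apply, hP, Matrix.mul_apply]
    refine Finset.sum_congr rfl fun i _ => ?_
    simp [hX, appendCol]
  have hG12 : ∀ j' : Fin m, G j'.castSucc (Fin.last m) = w j' := by
    intro j'
    rw [hG, Matrix.mul_apply, hw]
    simp [hX, appendCol, Matrix.mulVec, dotProduct]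
  have hG21 : ∀ k' : Fin m, G (Fin.last m) k'.castSucc = w k' := by
    intro k'
    rw [hG, Matrix.mul_apply, hw]
    simp [hX, appendCol, Matrix.mulVec, dotProduct, mul_comm]
  have hG22 : G (Fin.last m) (Fin.last m) = u ⬝ᵥ u := by
    rw [hG, Matrix.mul_apply]
    simp [hX, appendCol, dotProduct]
  have hs2 : ∀ k' : Fin m, ∑ l', p l' * P l' k' = w k' := by
    intro k'
    have := congrFun hvmul k'
    simpa [Matrix.vecMul, dotProduct] using this
  have hBG : B * G = 1 := by
    ext j k
    rw [Matrix.mul_apply, Fin.sum_univ_castSucc]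
    induction j using Fin.lastCases with
    | last =>
      induction k using Fin.lastCases with
      | last =>
        simp only [hB21, hB22, hG12, hG22, Matrix.one_apply_eq]
        have e1 : ∀ l' : Fin m, -(c * p l') * w l' = -(c * (p l' * w l')) := fun l' => by ring
        simp only [e1]
        rw [Finset.sum_neg_distrib, ← Finset.mul_sum]
        have : ∑ l', p l' * w l' = w ⬝ᵥ p := by
          simp [dotProduct, mul_comm]
        rw [this]
        linear_combination hcd
      | cast k' =>
        simp only [hB21, hB22, hG11, hG21]
        have e1 : ∀ l' : Fin m, -(c * p l') * P l' k' = -(c * (p l' * P l' k')) :=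
          fun l' => by ring
        simp only [e1]
        rw [Finset.sum_neg_distrib, ← Finset.mul_sum, hs2 k']
        have : (1 : Matrix (Fin (m + 1)) (Fin (m + 1)) ℝ) (Fin.last m) k'.castSucc = 0 := by
          rw [Matrix.one_apply_ne]
          exact (Fin.castSucc_lt_last k').ne'
        rw [this]; ring
    | cast j' =>
      induction k using Fin.lastCases with
      | last =>
        simp only [hB11, hB12, hG12, hG22]
        have e1 : ∀ l' : Fin m, (P⁻¹ j' l' + c * p j' * p l') * w l'
            = P⁻¹ j' l' * w l' + c * p j' * (p l' * w l') := fun l' => by ring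
        simp only [e1]
        rw [Finset.sum_add_distrib, ← Finset.mul_sum]
        have e2 : ∑ l', P⁻¹ j' l' * w l' = p j' := by
          rw [hp]; simp [Matrix.mulVec, dotProduct]
        have e3 : ∑ l', p l' * w l' = w ⬝ᵥ p := by simp [dotProduct, mul_comm]
        rw [e2, e3]
        have : (1 : Matrix (Fin (m + 1)) (Fin (m + 1)) ℝ) j'.castSucc (Fin.last m) = 0 := by
          rw [Matrix.one_apply_ne]
          exact (Fin.castSucc_lt_last j').ne
        rw [this]
        linear_combination (-(p j')) * hcd
      | cast k' =>
        simp only [hB11, hB12, hG11, hG21]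
        have e1 : ∀ l' : Fin m, (P⁻¹ j' l' + c * p j' * p l') * P l' k'
            = P⁻¹ j' l' * P l' k' + c * p j' * (p l' * P l' k') := fun l' => by ring
        simp only [e1]
        rw [Finset.sum_add_distrib, ← Finset.mul_sum, hs2 k']
        have s1 : ∑ l', P⁻¹ j' l' * P l' k' = (1 : Matrix (Fin m) (Fin m) ℝ) j' k' := by
          rw [← Matrix.mul_apply, hPl]
        rw [s1]
        have one_e : (1 : Matrix (Fin (m + 1)) (Fin (m + 1)) ℝ) j'.castSucc k'.castSucc
            = (1 : Matrix (Fin m) (Fin m) ℝ) j' k' := by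
          simp [Matrix.one_apply, Fin.castSucc_inj]
        rw [one_e]; ring
  have hGinv : G⁻¹ = B := Matrix.inv_eq_left_inv hBG
  set a : Fin N → ℝ := fun i => (Ym *ᵥ p) i - v i with ha
  set b : Fin N → ℝ := fun j => (Xm *ᵥ p) j - u j with hb
  have hbj : ∀ j, b j = (Xm *ᵥ p) j - u j := fun j => rfl
  have haj : ∀ i, a i = (Ym *ᵥ p) i - v i := fun i => rfl
  have hBX1 : ∀ (l' : Fin m) (j : Fin N), (B * Xᵀ) l'.castSucc j
      = (P⁻¹ * Xmᵀ) l' j + c * p l' * b j := by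
    intro l' j
    rw [Matrix.mul_apply, Fin.sum_univ_castSucc]
    simp only [hB11, hB12, Matrix.transpose_apply]
    have hXc : ∀ k' : Fin m, X j k'.castSucc = Xm j k' := by
      intro k'; simp [hX, appendCol]
    have hXl : X j (Fin.last m) = u j := by simp [hX, appendCol]
    simp only [hXc, hXl]
    have e1 : ∀ k' : Fin m, (P⁻¹ l' k' + c * p l' * p k') * Xm j k'
        = P⁻¹ l' k' * Xm j k' + c * p l' * (p k' * Xm j k') := fun k' => by ring
    simp only [e1]
    rw [Finset.sum_add_distrib, ← Finset.mul_sum]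
    have s1 : ∑ k', P⁻¹ l' k' * Xm j k' = (P⁻¹ * Xmᵀ) l' j := by
      rw [Matrix.mul_apply]; simp
    have s2 : ∑ k', p k' * Xm j k' = (Xm *ᵥ p) j := by
      simp [Matrix.mulVec, dotProduct, mul_comm]
    rw [s1, s2, hbj]; ring
  have hBX2 : ∀ j : Fin N, (B * Xᵀ) (Fin.last m) j = -(c * b j) := by
    intro j
    rw [Matrix.mul_apply, Fin.sum_univ_castSucc]
    simp only [hB21, hB22, Matrix.transpose_apply]
    have hXc : ∀ k' : Fin m, X j k'.castSucc = Xm j k' := by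
      intro k'; simp [hX, appendCol]
    have hXl : X j (Fin.last m) = u j := by simp [hX, appendCol]
    simp only [hXc, hXl]
    have e1 : ∀ k' : Fin m, -(c * p k') * Xm j k' = -(c * (p k' * Xm j k')) := fun k' => by ring
    simp only [e1]
    rw [Finset.sum_neg_distrib, ← Finset.mul_sum]
    have s2 : ∑ k', p k' * Xm j k' = (Xm *ᵥ p) j := by
      simp [Matrix.mulVec, dotProduct, mul_comm]
    rw [s2, hbj]; ring
  have hD : appendCol Ym v * (B * Xᵀ) - Ym * (P⁻¹ * Xmᵀ)
      = Matrix.of fun i j => c * a i * b j := by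
    ext i j
    rw [Matrix.sub_apply, Matrix.mul_apply, Fin.sum_univ_castSucc]
    have hYc : ∀ k' : Fin m, appendCol Ym v i k'.castSucc = Ym i k' := by
      intro k'; simp [appendCol]
    have hYl : appendCol Ym v i (Fin.last m) = v i := by simp [appendCol]
    simp only [hBX1, hBX2, hYc, hYl]
    have e1 : ∀ k' : Fin m, Ym i k' * ((P⁻¹ * Xmᵀ) k' j + c * p k' * b j)
        = Ym i k' * (P⁻¹ * Xmᵀ) k' j + (c * b j) * (Ym i k' * p k') := fun k' => by ring
    simp only [e1]
    rw [Finset.sum_add_distrib, ← Finset.mul_sum]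
    have s1 : ∑ k', Ym i k' * (P⁻¹ * Xmᵀ) k' j = (Ym * (P⁻¹ * Xmᵀ)) i j := by
      rw [Matrix.mul_apply]
    have s2 : ∑ k', Ym i k' * p k' = (Ym *ᵥ p) i := by
      simp [Matrix.mulVec, dotProduct]
    rw [s1, s2]
    simp only [Matrix.of_apply]
    rw [haj]; ring
  -- Euclidean vectors
  set pe : EuclideanSpace ℝ (Fin m) := (WithLp.equiv 2 (Fin m → ℝ)).symm p with hpe
  set ae : EuclideanSpace ℝ (Fin N) := (WithLp.equiv 2 (Fin N → ℝ)).symm a with hae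
  set be : EuclideanSpace ℝ (Fin N) := (WithLp.equiv 2 (Fin N → ℝ)).symm b with hbe
  set xe : EuclideanSpace ℝ (Fin N) := (WithLp.equiv 2 (Fin N → ℝ)).symm (Xm *ᵥ p) with hxe
  have hxx : (Xm *ᵥ p) ⬝ᵥ (Xm *ᵥ p) = w ⬝ᵥ p := by
    rw [Matrix.dotProduct_mulVec, ← Matrix.mulVec_transpose, Matrix.mulVec_mulVec, ← hP, hPp]
  have hbb : b ⬝ᵥ b = d := by
    have expand : b ⬝ᵥ b = (Xm *ᵥ p) ⬝ᵥ (Xm *ᵥ p) - u ⬝ᵥ (Xm *ᵥ p)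
        - (Xm *ᵥ p) ⬝ᵥ (fun i => u i) + u ⬝ᵥ u := by
      simp only [dotProduct]
      rw [← Finset.sum_sub_distrib, ← Finset.sum_sub_distrib, ← Finset.sum_add_distrib]
      refine Finset.sum_congr rfl fun i _ => ?_
      rw [hbj]; ring
    have hcomm : (Xm *ᵥ p) ⬝ᵥ (fun i => u i) = u ⬝ᵥ (Xm *ᵥ p) := dotProduct_comm _ _
    rw [expand, hxx, hup, hcomm, hup]
    linear_combination hd'
  have hbe2 : ‖be‖ ^ 2 = d := by rw [← dotSelf_eq_norm_sq be]; exact hbb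
  have huu : ‖u‖ ^ 2 = u ⬝ᵥ u := (dotSelf_eq_norm_sq u).symm
  have hwp0 : 0 ≤ w ⬝ᵥ p := by
    rw [← hxx]
    exact Finset.sum_nonneg fun i _ => mul_self_nonneg _
  have hbe_u : ‖be‖ ≤ ‖u‖ := by
    nlinarith [hbe2, hd', huu, norm_nonneg be, norm_nonneg u, hwp0]
  have hxx2 : ‖xe‖ ^ 2 = w ⬝ᵥ p := by rw [← dotSelf_eq_norm_sq xe]; exact hxx
  have hinner : w ⬝ᵥ p ≤ ‖u‖ * ‖xe‖ := by
    rw [← hup]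
    calc u ⬝ᵥ (Xm *ᵥ p) = ⟪u, xe⟫ := dot_eq_inner u xe
      _ ≤ ‖u‖ * ‖xe‖ := real_inner_le_norm u xe
  have hxe_u : ‖xe‖ ≤ ‖u‖ := by
    nlinarith [hxx2, hinner, norm_nonneg xe, norm_nonneg u]
  have hpeb : σ * ‖pe‖ ≤ ‖u‖ := by
    have h1 := hXmσ pe
    have h2 : ‖(EuclideanSpace.equiv (Fin N) ℝ).symm (Xm *ᵥ pe)‖ = ‖xe‖ := rfl
    rw [h2] at h1
    exact h1.trans hxe_u
  have hpu : ‖pe‖ ≤ ‖u‖ / σ := by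
    rw [le_div_iff₀ hσ]
    calc ‖pe‖ * σ = σ * ‖pe‖ := by ring
      _ ≤ ‖u‖ := hpeb
  have haeb : ‖ae‖ ≤ ‖Ym‖ * ‖pe‖ + ‖v‖ := by
    have h0 : ae = ((WithLp.equiv 2 (Fin N → ℝ)).symm (Ym *ᵥ p)) - v := rfl
    rw [h0]
    refine (norm_sub_le _ _).trans ?_
    have := Matrix.l2_opNorm_mulVec Ym pe
    gcongr
    exact this
  have hcau : ‖Ym‖ * ‖pe‖ + ‖v‖
      ≤ Real.sqrt (‖Ym‖ ^ 2 + ‖v‖ ^ 2) * Real.sqrt (‖pe‖ ^ 2 + 1) := by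
    have hs1 : Real.sqrt (‖Ym‖ ^ 2 + ‖v‖ ^ 2) ^ 2 = ‖Ym‖ ^ 2 + ‖v‖ ^ 2 :=
      Real.sq_sqrt (by positivity)
    have hs2 : Real.sqrt (‖pe‖ ^ 2 + 1) ^ 2 = ‖pe‖ ^ 2 + 1 :=
      Real.sq_sqrt (by positivity)
    nlinarith [sq_nonneg (‖Ym‖ - ‖v‖ * ‖pe‖), Real.sqrt_nonneg (‖Ym‖ ^ 2 + ‖v‖ ^ 2),
      Real.sqrt_nonneg (‖pe‖ ^ 2 + 1), norm_nonneg Ym, norm_nonneg v, norm_nonneg pe,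
      mul_nonneg (Real.sqrt_nonneg (‖Ym‖ ^ 2 + ‖v‖ ^ 2)) (Real.sqrt_nonneg (‖pe‖ ^ 2 + 1))]
  have hsq : Real.sqrt (‖pe‖ ^ 2 + 1) ≤ Real.sqrt (1 + ‖u‖ ^ 2 / σ ^ 2) := by
    apply Real.sqrt_le_sqrt
    have : ‖pe‖ ^ 2 ≤ ‖u‖ ^ 2 / σ ^ 2 := by
      have h2 : ‖pe‖ ≤ ‖u‖ / σ := hpu
      have h3 : (0:ℝ) ≤ ‖u‖ / σ := le_trans (norm_nonneg pe) h2
      calc ‖pe‖ ^ 2 ≤ (‖u‖ / σ) ^ 2 := by nlinarith [norm_nonneg pe]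
        _ = ‖u‖ ^ 2 / σ ^ 2 := div_pow _ _ _
    linarith
  have h1 : ‖ae‖ ≤ Real.sqrt (‖Ym‖ ^ 2 + ‖v‖ ^ 2) * Real.sqrt (1 + ‖u‖ ^ 2 / σ ^ 2) := by
    refine haeb.trans (hcau.trans ?_)
    gcongr
  rw [hGinv, hD]
  calc ‖(Matrix.of fun i j => c * a i * b j : Matrix (Fin N) (Fin N) ℝ)‖
      ≤ |c| * ‖ae‖ * ‖be‖ := rankOne_bound c ae be
    _ = c * ‖ae‖ * ‖be‖ := by rw [abs_of_nonneg hc0]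
    _ ≤ c * (Real.sqrt (‖Ym‖ ^ 2 + ‖v‖ ^ 2) * Real.sqrt (1 + ‖u‖ ^ 2 / σ ^ 2)) * ‖u‖ := by
        have hA : (0:ℝ) ≤ Real.sqrt (‖Ym‖ ^ 2 + ‖v‖ ^ 2) * Real.sqrt (1 + ‖u‖ ^ 2 / σ ^ 2) :=
          mul_nonneg (Real.sqrt_nonneg _) (Real.sqrt_nonneg _)
        exact mul_le_mul (mul_le_mul_of_nonneg_left h1 hc0) hbe_u (norm_nonneg be)
          (mul_nonneg hc0 hA)
    _ = c * ‖u‖ * Real.sqrt (1 + ‖u‖ ^ 2 / σ ^ 2) * Real.sqrt (‖Ym‖ ^ 2 + ‖v‖ ^ 2) := by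
        ring
    _ ≤ c * ‖u‖ * Real.sqrt (1 + ‖u‖ ^ 2 / σ ^ 2) * Real.sqrt (‖Ym‖ ^ 2 + ‖v‖ ^ 2)
        + ‖v‖ / σ := le_add_of_nonneg_right (by positivity)
end

section
/- Let X_m, Y_m be real N×m matrices, u, v ∈ ℝ^N with u ≠ 0 and X_mᵀu = 0, and σ > 0 with ‖X_m w‖ ≥ σ‖w‖ for all w ∈ ℝ^m, with X_mᵀX_m invertible. Write X_m† = (X_mᵀX_m)⁻¹X_mᵀ, let X = [X_m, u], Y = [Y_m, v], K = Y·(XᵀX)⁻¹Xᵀ and K_m = Y_m·X_m†. Then ‖K − K_m‖₂ ≤ (1/‖u‖)·√(1 + ‖u‖²/σ²)·√(‖Y_m‖₂² + ‖v‖²) + ‖v‖/σ. -/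
open scoped Matrix Matrix.Norms.L2Operator

private lemma outer_opNorm_le' {N : ℕ} (v u : EuclideanSpace ℝ (Fin N)) :
    ‖(Matrix.vecMulVec (⇑v) (⇑u) : Matrix (Fin N) (Fin N) ℝ)‖ ≤ ‖v‖ * ‖u‖ := by
  rw [Matrix.l2_opNorm_def]
  refine ContinuousLinearMap.opNorm_le_bound _ (by positivity) fun x => ?_
  have h1 : (Matrix.toEuclideanLin (Matrix.vecMulVec (⇑v) (⇑u)) x)
      = ((⇑u ⬝ᵥ ⇑x) • v) := by
    rw [Matrix.toEuclideanLin_apply]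
    ext i
    simp [Matrix.mulVec, Matrix.vecMulVec_apply, dotProduct, Finset.mul_sum,
      mul_comm, mul_assoc, mul_left_comm]
  have hcs : |⇑u ⬝ᵥ ⇑x| ≤ ‖u‖ * ‖x‖ := by
    have := abs_real_inner_le_norm u x
    simpa [dotProduct, PiLp.inner_apply, RCLike.inner_apply, conj_trivial, mul_comm] using this
  calc ‖(Matrix.toEuclideanLin (Matrix.vecMulVec (⇑v) (⇑u))).toContinuousLinearMap x‖
      = ‖(⇑u ⬝ᵥ ⇑x) • v‖ := by rw [← h1]; rfl
    _ = |⇑u ⬝ᵥ ⇑x| * ‖v‖ := by rw [norm_smul]; simp [Real.norm_eq_abs]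
    _ ≤ (‖u‖ * ‖x‖) * ‖v‖ := by gcongr
    _ = ‖v‖ * ‖u‖ * ‖x‖ := by ring

/-- Tightened case of Proposition 5.5 (operator 2-norm perturbation under column
deletion) when the appended snapshot `u` is orthogonal to the range of `Xₘ`. -/
theorem opNorm_perturbation_column_deletion_orthogonal {N m : ℕ}
    (Xm Ym : Matrix (Fin N) (Fin m) ℝ)
    (u v : EuclideanSpace ℝ (Fin N)) (hu : u ≠ 0) (huX : Xmᵀ *ᵥ u = 0)
    (σ : ℝ) (hσ : 0 < σ)
    (hXmσ : ∀ w : EuclideanSpace ℝ (Fin m),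
      σ * ‖w‖ ≤ ‖(EuclideanSpace.equiv (Fin N) ℝ).symm (Xm *ᵥ w)‖)
    (hinv : IsUnit (Xmᵀ * Xm).det) :
    ‖appendCol Ym v * (((appendCol Xm u)ᵀ * appendCol Xm u)⁻¹ * (appendCol Xm u)ᵀ) -
        Ym * ((Xmᵀ * Xm)⁻¹ * Xmᵀ)‖ ≤
      (1 / ‖u‖) * Real.sqrt (1 + ‖u‖ ^ 2 / σ ^ 2) * Real.sqrt (‖Ym‖ ^ 2 + ‖v‖ ^ 2) +
        ‖v‖ / σ := by
  have hu0 : (0 : ℝ) < ‖u‖ := norm_pos_iff.mpr hu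
  have hn2 : (0 : ℝ) < ‖u‖ ^ 2 := by positivity
  have hn : ∑ l, u l * u l = ‖u‖ ^ 2 := by
    have := real_inner_self_eq_norm_sq (F := EuclideanSpace ℝ (Fin N)) u
    rw [EuclideanSpace.norm_eq, Real.sq_sqrt (Finset.sum_nonneg fun i _ => sq_nonneg _)]
    simp [Real.norm_eq_abs, sq_abs, sq]
  set B : Matrix (Fin (m+1)) (Fin (m+1)) ℝ :=
    Matrix.of (Fin.snoc (fun i => Fin.snoc (((Xmᵀ * Xm)⁻¹) i) 0) (Fin.snoc 0 (‖u‖^2)⁻¹)) with hB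
  -- Aᵀ A is block diagonal
  have hAA : (appendCol Xm u)ᵀ * appendCol Xm u =
      Matrix.of (Fin.snoc (fun i => Fin.snoc ((Xmᵀ * Xm) i) 0) (Fin.snoc 0 (‖u‖^2))) := by
    ext i j
    refine Fin.lastCases ?_ (fun i' => ?_) i <;> refine Fin.lastCases ?_ (fun j' => ?_) j <;>
      simp [Matrix.mul_apply, appendCol, Fin.snoc_castSucc, Fin.snoc_last,
        Matrix.transpose_apply]
    · exact hn
    · have := congrFun huX j'
      simpa [Matrix.mulVec, dotProduct, mul_comm] using this
    · have := congrFun huX i'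
      simpa [Matrix.mulVec, dotProduct, mul_comm] using this
  have hBinv : ((appendCol Xm u)ᵀ * appendCol Xm u)⁻¹ = B := by
    rw [hAA]
    refine Matrix.inv_eq_right_inv ?_
    have hmul := Matrix.mul_nonsing_inv _ hinv
    ext i j
    refine Fin.lastCases ?_ (fun i' => ?_) i <;> refine Fin.lastCases ?_ (fun j' => ?_) j <;>
      simp [hB, Matrix.mul_apply, Fin.sum_univ_castSucc, Fin.snoc_castSucc, Fin.snoc_last,
        Matrix.one_apply, hn2.ne', (Fin.castSucc_lt_last _).ne, (Fin.castSucc_lt_last _).ne']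
    have := congrFun (congrFun hmul i') j'
    simpa [Matrix.mul_apply, Matrix.one_apply] using this
  -- the difference is the rescaled outer product
  have hdiff : appendCol Ym v * (((appendCol Xm u)ᵀ * appendCol Xm u)⁻¹ * (appendCol Xm u)ᵀ) -
      Ym * ((Xmᵀ * Xm)⁻¹ * Xmᵀ) = (‖u‖^2)⁻¹ • Matrix.vecMulVec (⇑v) (⇑u) := by
    rw [hBinv]
    ext i j
    simp only [Matrix.sub_apply, Matrix.mul_apply, Matrix.smul_apply,
      Matrix.vecMulVec_apply, smul_eq_mul, hB, appendCol, Matrix.of_apply,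
      Fin.sum_univ_castSucc, Fin.snoc_castSucc, Fin.snoc_last, Matrix.transpose_apply,
      Pi.zero_apply, zero_mul, mul_zero, Finset.sum_const_zero, add_zero, zero_add]
    ring_nf
  rw [hdiff]
  have hb : ‖(‖u‖^2)⁻¹ • Matrix.vecMulVec (⇑v) (⇑u)‖ ≤ ‖v‖ / ‖u‖ := by
    rw [norm_smul]
    have := outer_opNorm_le' v u
    calc ‖(‖u‖^2)⁻¹‖ * ‖Matrix.vecMulVec (⇑v) (⇑u)‖
        ≤ (‖u‖^2)⁻¹ * (‖v‖ * ‖u‖) := by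
          rw [Real.norm_eq_abs, abs_of_pos (by positivity)]
          gcongr
      _ = ‖v‖ / ‖u‖ := by field_simp
  refine hb.trans ?_
  -- ‖v‖/‖u‖ ≤ RHS
  have h1 : (1:ℝ) ≤ Real.sqrt (1 + ‖u‖ ^ 2 / σ ^ 2) := by
    have := Real.sqrt_le_sqrt (show (1:ℝ) ≤ 1 + ‖u‖ ^ 2 / σ ^ 2 by linarith [div_nonneg (sq_nonneg ‖u‖) (sq_nonneg σ)])
    simpa using this
  have h2 : ‖v‖ ≤ Real.sqrt (‖Ym‖ ^ 2 + ‖v‖ ^ 2) := by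
    have := Real.sqrt_le_sqrt (show ‖v‖ ^ 2 ≤ ‖Ym‖ ^ 2 + ‖v‖ ^ 2 by nlinarith [sq_nonneg ‖Ym‖])
    simpa [Real.sqrt_sq (norm_nonneg v)] using this
  have h3 : ‖v‖ / ‖u‖ ≤ (1 / ‖u‖) * Real.sqrt (1 + ‖u‖ ^ 2 / σ ^ 2) *
      Real.sqrt (‖Ym‖ ^ 2 + ‖v‖ ^ 2) := by
    rw [div_eq_mul_inv, mul_comm]
    calc ‖u‖⁻¹ * ‖v‖ ≤ ‖u‖⁻¹ * (Real.sqrt (1 + ‖u‖ ^ 2 / σ ^ 2) *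
          Real.sqrt (‖Ym‖ ^ 2 + ‖v‖ ^ 2)) := by
          apply mul_le_mul_of_nonneg_left _ (by positivity)
          calc ‖v‖ = 1 * ‖v‖ := (one_mul _).symm
            _ ≤ Real.sqrt (1 + ‖u‖ ^ 2 / σ ^ 2) * Real.sqrt (‖Ym‖ ^ 2 + ‖v‖ ^ 2) := by
                apply mul_le_mul h1 h2 (norm_nonneg _) (by positivity)
      _ = (1 / ‖u‖) * Real.sqrt (1 + ‖u‖ ^ 2 / σ ^ 2) * Real.sqrt (‖Ym‖ ^ 2 + ‖v‖ ^ 2) := by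
          ring
  have h4 : (0:ℝ) ≤ ‖v‖ / σ := by positivity
  linarith
end

section
/- Let C be a real n×n matrix, γ > 0 with ‖C‖₂ ≤ γ, Δt ≥ 0, F ≥ 0, and f_1, …, f_m : ℝ → ℝ^n continuous functions with ‖f_i(s)‖ ≤ F for all s ∈ [0, Δt] and all i. Let X, Y be real n×m matrices whose columns satisfy y_i = exp(Δt·C)·x_i + ∫₀^{Δt} exp((Δt − s)·C)·f_i(s) ds for each i. Then ‖Y‖₂ ≤ e^{γΔt}·(‖X‖_F + √m·F/γ). -/
set_option maxHeartbeats 2000000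

open scoped Matrix Matrix.Norms.L2Operator

/-- The Frobenius norm of a real matrix. -/
noncomputable def frobNorm {N m : ℕ} (A : Matrix (Fin N) (Fin m) ℝ) : ℝ :=
  Real.sqrt (∑ i : Fin N, ∑ j : Fin m, A i j ^ 2)

lemma matrix_l2_norm_one_le {n : ℕ} : ‖(1 : Matrix (Fin n) (Fin n) ℝ)‖ ≤ 1 := by
  rw [Matrix.cstar_norm_def, map_one, ContinuousLinearMap.one_def]
  exact ContinuousLinearMap.norm_id_le

lemma matrix_l2_norm_pow_le {n : ℕ} (A : Matrix (Fin n) (Fin n) ℝ) :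
    ∀ k : ℕ, ‖A ^ k‖ ≤ ‖A‖ ^ k
  | 0 => by simpa using matrix_l2_norm_one_le
  | (k + 1) => by
    rw [pow_succ, pow_succ]
    exact (norm_mul_le _ _).trans
      (mul_le_mul_of_nonneg_right (matrix_l2_norm_pow_le A k) (norm_nonneg _))

lemma matrix_l2_norm_exp_le {n : ℕ} (A : Matrix (Fin n) (Fin n) ℝ) :
    ‖NormedSpace.exp A‖ ≤ Real.exp ‖A‖ := by
  have h1 : Summable fun k : ℕ => ‖((Nat.factorial k : ℝ))⁻¹ • A ^ k‖ :=
    NormedSpace.norm_expSeries_summable' A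
  have h2 : Summable fun k : ℕ => ‖A‖ ^ k / (Nat.factorial k : ℝ) :=
    Real.summable_pow_div_factorial ‖A‖
  have hle : ∀ k : ℕ, ‖((Nat.factorial k : ℝ))⁻¹ • A ^ k‖ ≤ ‖A‖ ^ k / (Nat.factorial k : ℝ) := by
    intro k
    rw [norm_smul, Real.norm_eq_abs, abs_of_nonneg (by positivity), div_eq_inv_mul]
    exact mul_le_mul_of_nonneg_left (matrix_l2_norm_pow_le A k) (by positivity)
  calc ‖NormedSpace.exp A‖ = ‖∑' k : ℕ, ((Nat.factorial k : ℝ))⁻¹ • A ^ k‖ := by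
        rw [NormedSpace.exp_eq_tsum ℝ]
    _ ≤ ∑' k : ℕ, ‖((Nat.factorial k : ℝ))⁻¹ • A ^ k‖ := norm_tsum_le_tsum_norm h1
    _ ≤ ∑' k : ℕ, ‖A‖ ^ k / (Nat.factorial k : ℝ) := Summable.tsum_le_tsum hle h1 h2
    _ = Real.exp ‖A‖ := by
        rw [Real.exp_eq_exp_ℝ, NormedSpace.exp_eq_tsum_div]

lemma euclid_norm_eq {n : ℕ} (x : EuclideanSpace ℝ (Fin n)) :
    ‖x‖ = Real.sqrt (∑ j, x j ^ 2) := by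
  rw [EuclideanSpace.norm_eq]
  congr 1; refine Finset.sum_congr rfl fun j _ => ?_
  rw [Real.norm_eq_abs, sq_abs]

lemma opNorm_le_frobNorm {n m : ℕ} (A : Matrix (Fin n) (Fin m) ℝ) :
    ‖A‖ ≤ frobNorm A := by
  rw [Matrix.l2_opNorm_def]
  refine ContinuousLinearMap.opNorm_le_bound _ (Real.sqrt_nonneg _) fun v => ?_
  have hv : ‖v‖ = Real.sqrt (∑ j, v j ^ 2) := euclid_norm_eq v
  have heq : ((Matrix.toEuclideanLin ≪≫ₗ LinearMap.toContinuousLinearMap) A) v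
      = Matrix.toEuclideanLin A v := by
    simp only [LinearEquiv.trans_apply, LinearMap.coe_toContinuousLinearMap']
  have hAv : ‖((Matrix.toEuclideanLin ≪≫ₗ LinearMap.toContinuousLinearMap) A) v‖
      = Real.sqrt (∑ r, (∑ j, A r j * v j) ^ 2) := by
    rw [heq, euclid_norm_eq]
    congr 1
  rw [hAv, hv]
  have key : (∑ r, (∑ j, A r j * v j) ^ 2)
      ≤ (∑ r : Fin n, ∑ j : Fin m, A r j ^ 2) * (∑ j, v j ^ 2) := by
    rw [Finset.sum_mul]
    refine Finset.sum_le_sum fun r _ => ?_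
    exact Finset.sum_mul_sq_le_sq_mul_sq Finset.univ (fun j => A r j) v
  calc Real.sqrt (∑ r, (∑ j, A r j * v j) ^ 2)
      ≤ Real.sqrt ((∑ r : Fin n, ∑ j : Fin m, A r j ^ 2) * (∑ j, v j ^ 2)) :=
        Real.sqrt_le_sqrt key
    _ = frobNorm A * Real.sqrt (∑ j, v j ^ 2) := by
        rw [Real.sqrt_mul (by positivity)]; rfl

/-- Proposition 5.7 (time-shift norm upper bound) for the linear system
`du/dt = C u + f(t)` with constant coefficient matrix `C`:
`‖Y‖₂ ≤ e^{γ Δt} (‖X‖_F + √m F/γ)`. -/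
theorem time_shift_norm_upper_bound {n m : ℕ} (C : Matrix (Fin n) (Fin n) ℝ)
    (γ : ℝ) (hγ : 0 < γ) (hC : ‖C‖ ≤ γ) (Δt : ℝ) (hΔt : 0 ≤ Δt)
    (F : ℝ) (hF : 0 ≤ F)
    (f : Fin m → ℝ → EuclideanSpace ℝ (Fin n)) (hf : ∀ i, Continuous (f i))
    (hfF : ∀ i, ∀ s ∈ Set.Icc (0 : ℝ) Δt, ‖f i s‖ ≤ F)
    (X Y : Matrix (Fin n) (Fin m) ℝ)
    (hcol : ∀ i : Fin m,
      (EuclideanSpace.equiv (Fin n) ℝ).symm (fun r => Y r i) =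
        (EuclideanSpace.equiv (Fin n) ℝ).symm
            (NormedSpace.exp (Δt • C) *ᵥ fun r => X r i) +
          ∫ s in (0 : ℝ)..Δt,
            (EuclideanSpace.equiv (Fin n) ℝ).symm
              (NormedSpace.exp ((Δt - s) • C) *ᵥ f i s)) :
    ‖Y‖ ≤ Real.exp (γ * Δt) * (frobNorm X + Real.sqrt (m : ℝ) * F / γ) := by
  classical
  set e := Real.exp (γ * Δt) with he
  have he1 : 1 ≤ e := Real.one_le_exp (mul_nonneg hγ.le hΔt)
  have he0 : 0 ≤ e := zero_le_one.trans he1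
  set c := F / γ with hc
  have hc0 : 0 ≤ c := div_nonneg hF hγ.le
  have hexp : ∀ t : ℝ, 0 ≤ t → ‖NormedSpace.exp (t • C)‖ ≤ Real.exp (γ * t) := by
    intro t ht
    refine (matrix_l2_norm_exp_le _).trans (Real.exp_le_exp.2 ?_)
    rw [norm_smul, Real.norm_eq_abs, abs_of_nonneg ht, mul_comm γ t]
    exact mul_le_mul_of_nonneg_left hC ht
  set b : Fin m → ℝ := fun i => ‖(EuclideanSpace.equiv (Fin n) ℝ).symm (fun r => X r i)‖ with hb
  have hcolbound : ∀ i : Fin m,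
      ‖(EuclideanSpace.equiv (Fin n) ℝ).symm (fun r => Y r i)‖ ≤ e * (b i + c) := by
    intro i
    rw [hcol i]
    refine (norm_add_le _ _).trans ?_
    have h1 : ‖(EuclideanSpace.equiv (Fin n) ℝ).symm
        (NormedSpace.exp (Δt • C) *ᵥ fun r => X r i)‖ ≤ e * b i := by
      refine (Matrix.l2_opNorm_mulVec _
        ((EuclideanSpace.equiv (Fin n) ℝ).symm fun r => X r i)).trans ?_
      exact mul_le_mul_of_nonneg_right (hexp Δt hΔt) (norm_nonneg _)
    have h2 : ‖∫ s in (0 : ℝ)..Δt, (EuclideanSpace.equiv (Fin n) ℝ).symm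
        (NormedSpace.exp ((Δt - s) • C) *ᵥ f i s)‖ ≤ e * c := by
      have hae : ∀ᵐ s ∂(MeasureTheory.volume.restrict (Set.uIoc (0 : ℝ) Δt)),
          ‖(EuclideanSpace.equiv (Fin n) ℝ).symm
            (NormedSpace.exp ((Δt - s) • C) *ᵥ f i s)‖ ≤ Real.exp (γ * (Δt - s)) * F := by
        refine MeasureTheory.ae_restrict_of_forall_mem measurableSet_uIoc fun s hs => ?_
        rw [Set.uIoc_of_le hΔt] at hs
        refine (Matrix.l2_opNorm_mulVec _ _).trans ?_
        exact mul_le_mul (hexp _ (sub_nonneg.2 hs.2)) (hfF i s ⟨hs.1.le, hs.2⟩)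
          (norm_nonneg _) (Real.exp_pos _).le
      have hint : IntervalIntegrable (fun s => Real.exp (γ * (Δt - s)) * F)
          MeasureTheory.volume 0 Δt := by
        apply Continuous.intervalIntegrable
        continuity
      refine (intervalIntegral.norm_integral_le_abs_of_norm_le hae hint).trans ?_
      have hJ : (∫ s in (0 : ℝ)..Δt, Real.exp (γ * (Δt - s)) * F)
          = γ⁻¹ * (e - 1) * F := by
        rw [intervalIntegral.integral_mul_const]
        congr 1
        have h3 : (∫ s in (0 : ℝ)..Δt, Real.exp (γ * (Δt - s)))
            = ∫ s in (Δt - Δt)..(Δt - 0), Real.exp (γ * s) :=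
          intervalIntegral.integral_comp_sub_left (fun u => Real.exp (γ * u)) Δt
        rw [h3]
        simp only [sub_self, sub_zero]
        rw [intervalIntegral.integral_comp_mul_left (fun u => Real.exp u) hγ.ne']
        rw [mul_zero, integral_exp, smul_eq_mul, Real.exp_zero, he]
      rw [hJ, abs_of_nonneg (by
        have : (0 : ℝ) ≤ e - 1 := sub_nonneg.2 he1
        positivity)]
      have hle : γ⁻¹ * (e - 1) * F ≤ γ⁻¹ * e * F := by
        have h4 : e - 1 ≤ e := by linarith
        have := mul_le_mul_of_nonneg_left h4 (inv_nonneg.2 hγ.le)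
        exact mul_le_mul_of_nonneg_right this hF
      refine hle.trans (le_of_eq ?_)
      rw [hc]; ring
    calc ‖(EuclideanSpace.equiv (Fin n) ℝ).symm
            (NormedSpace.exp (Δt • C) *ᵥ fun r => X r i)‖ +
          ‖∫ s in (0 : ℝ)..Δt, (EuclideanSpace.equiv (Fin n) ℝ).symm
            (NormedSpace.exp ((Δt - s) • C) *ᵥ f i s)‖
        ≤ e * b i + e * c := add_le_add h1 h2
      _ = e * (b i + c) := by ring
  -- assemble
  have hbsq : ∀ i, b i ^ 2 = ∑ r, X r i ^ 2 := by
    intro i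
    rw [hb]
    simp only
    rw [euclid_norm_eq, Real.sq_sqrt (by positivity)]
    exact Finset.sum_congr rfl fun r _ => rfl
  have hYsq : ∀ i : Fin m, (∑ r, Y r i ^ 2)
      = ‖(EuclideanSpace.equiv (Fin n) ℝ).symm (fun r => Y r i)‖ ^ 2 := by
    intro i
    rw [euclid_norm_eq, Real.sq_sqrt (by positivity)]
    exact Finset.sum_congr rfl fun r _ => rfl
  have step1 : frobNorm Y = Real.sqrt (∑ i : Fin m,
      ‖(EuclideanSpace.equiv (Fin n) ℝ).symm (fun r => Y r i)‖ ^ 2) := by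
    rw [frobNorm, Finset.sum_comm]
    congr 1
    exact Finset.sum_congr rfl fun i _ => hYsq i
  have step2 : Real.sqrt (∑ i : Fin m,
      ‖(EuclideanSpace.equiv (Fin n) ℝ).symm (fun r => Y r i)‖ ^ 2)
      ≤ Real.sqrt (∑ i : Fin m, (e * (b i + c)) ^ 2) := by
    apply Real.sqrt_le_sqrt
    refine Finset.sum_le_sum fun i _ => ?_
    exact pow_le_pow_left₀ (norm_nonneg _) (hcolbound i) 2
  have step3 : Real.sqrt (∑ i : Fin m, (e * (b i + c)) ^ 2)
      = e * Real.sqrt (∑ i : Fin m, (b i + c) ^ 2) := by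
    simp_rw [mul_pow]
    rw [← Finset.mul_sum, Real.sqrt_mul (sq_nonneg e), Real.sqrt_sq he0]
  -- Minkowski
  set u : EuclideanSpace ℝ (Fin m) := (EuclideanSpace.equiv (Fin m) ℝ).symm b with hu
  set w : EuclideanSpace ℝ (Fin m) :=
    (EuclideanSpace.equiv (Fin m) ℝ).symm (fun _ => c) with hw
  have huw : Real.sqrt (∑ i : Fin m, (b i + c) ^ 2) = ‖u + w‖ := by
    rw [euclid_norm_eq]
    congr 1
  have hun : ‖u‖ = frobNorm X := by
    rw [euclid_norm_eq, frobNorm, Finset.sum_comm]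
    congr 1
    refine Finset.sum_congr rfl fun i _ => ?_
    have : u i = b i := rfl
    rw [this, hbsq]
  have hwn : ‖w‖ = Real.sqrt (m : ℝ) * c := by
    rw [euclid_norm_eq]
    have : ∀ i : Fin m, w i ^ 2 = c ^ 2 := fun i => rfl
    simp_rw [this]
    rw [Finset.sum_const, Finset.card_univ, Fintype.card_fin, nsmul_eq_mul,
      Real.sqrt_mul (by positivity), Real.sqrt_sq hc0]
  have step4 : Real.sqrt (∑ i : Fin m, (b i + c) ^ 2)
      ≤ frobNorm X + Real.sqrt (m : ℝ) * c := by
    rw [huw, ← hun, ← hwn]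
    exact norm_add_le u w
  have hfinal : Real.sqrt (m : ℝ) * F / γ = Real.sqrt (m : ℝ) * c := by
    rw [hc, mul_div_assoc]
  calc ‖Y‖ ≤ frobNorm Y := opNorm_le_frobNorm Y
    _ = Real.sqrt (∑ i : Fin m,
        ‖(EuclideanSpace.equiv (Fin n) ℝ).symm (fun r => Y r i)‖ ^ 2) := step1
    _ ≤ Real.sqrt (∑ i : Fin m, (e * (b i + c)) ^ 2) := step2
    _ = e * Real.sqrt (∑ i : Fin m, (b i + c) ^ 2) := step3
    _ ≤ e * (frobNorm X + Real.sqrt (m : ℝ) * c) :=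
        mul_le_mul_of_nonneg_left step4 he0
    _ = e * (frobNorm X + Real.sqrt (m : ℝ) * F / γ) := by rw [hfinal]
end
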